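/- Let f_i(x) = ρx + b_i (i = 1,…,N) be an equi-contractive IFS on ℝ with 0 = b_1 < b_2 < … < b_N = 1 − ρ, attractor E, and let μ be the self-similar measure associated with a positive probability vector (p_i)_{i=1}^N. Let ω ∈ 𝒜* be a finite word with letters ω_1,…,ω_m, write p_ω = p_{ω_1}⋯p_{ω_m}, and let I ⊆ ℝ be a Borel set with μ(I) > 0 and f_ω(E) ⊆ I. Let μ_I := μ(·|I) denote the conditional measure μ_I(B) = μ(B ∩ I)/μ(I). Then for every r ∈ (0,∞) and every n ≥ 1, e_{n,r}(μ_I)^r ≥ p_ω ρ^{mr} e_{n,r}(μ)^r; consequently, for every t > 0, Q̄_r^t(μ_I) ≥ p_ω ρ^{mr} Q̄_r^t(μ). -/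

import Mathlib

open MeasureTheory Filter Set
open scoped ENNReal

/-- The `k`-th quantization error of order `r` for a measure on `ℝ`, raised to the power `r`. -/
noncomputable def quantErrPow (r : ℝ) (ν : Measure ℝ) (k : ℕ) : ℝ :=
  sInf {y | ∃ α : Finset ℝ, α.Nonempty ∧ α.card ≤ k ∧
    y = ∫ x, (Metric.infDist x (α : Set ℝ)) ^ r ∂ν}

/-- For a word `σ = σ₁…σₙ`, the composition `f_{σ₁} ∘ ⋯ ∘ f_{σₙ}`. -/
def iterMap {N : ℕ} (f : Fin N → ℝ → ℝ) : List (Fin N) → ℝ → ℝ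
  | [] => id
  | i :: σ => f i ∘ iterMap f σ

lemma infDist_affine_image {c : ℝ} (hc : 0 < c) (d : ℝ) (x : ℝ) {s : Set ℝ}
    (hs : s.Nonempty) :
    Metric.infDist (c * x + d) ((fun y => c * y + d) '' s) = c * Metric.infDist x s := by
  have hdist : ∀ y : ℝ, dist (c * x + d) (c * y + d) = c * dist x y := by
    intro y
    rw [Real.dist_eq, Real.dist_eq,
      show c * x + d - (c * y + d) = c * (x - y) by ring, abs_mul, abs_of_pos hc]
  have hne' : ((fun y => c * y + d) '' s).Nonempty := hs.image _
  apply le_antisymm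
  · rw [← div_le_iff₀' hc]
    by_contra h
    push_neg at h
    obtain ⟨y, hy, hlt⟩ := (Metric.infDist_lt_iff hs).1 h
    have h1 : Metric.infDist (c * x + d) ((fun y => c * y + d) '' s) ≤ c * dist x y := by
      rw [← hdist y]
      exact Metric.infDist_le_dist_of_mem (mem_image_of_mem _ hy)
    rw [lt_div_iff₀' hc] at hlt
    linarith
  · by_contra h
    push_neg at h
    obtain ⟨z, hz, hlt⟩ := (Metric.infDist_lt_iff hne').1 h
    obtain ⟨y, hy, rfl⟩ := hz
    rw [hdist y, mul_lt_mul_iff_right₀ hc] at hlt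
    exact absurd (Metric.infDist_le_dist_of_mem hy) (not_le.2 hlt)

theorem stmt7
    (N : ℕ) (hN : 2 ≤ N) (ρ : ℝ) (hρ : ρ ∈ Set.Ioo (0 : ℝ) 1)
    (b : Fin N → ℝ) (hb : StrictMono b)
    (hb0 : b ⟨0, by omega⟩ = 0) (hbN : b ⟨N - 1, by omega⟩ = 1 - ρ)
    (f : Fin N → ℝ → ℝ) (hf : ∀ i x, f i x = ρ * x + b i)
    (E : Set ℝ) (hEcpt : IsCompact E) (hEne : E.Nonempty)
    (hE : E = ⋃ i, f i '' E)
    (p : Fin N → ℝ) (hp : ∀ i, 0 < p i) (hp1 : ∑ i, p i = 1)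
    (μ : Measure ℝ) [IsProbabilityMeasure μ]
    (hμ : μ = ∑ i, ENNReal.ofReal (p i) • μ.map (f i))
    (ω : List (Fin N)) (hω : ω ≠ [])
    (I : Set ℝ) (hImeas : MeasurableSet I) (hIpos : 0 < μ I)
    (hIE : iterMap f ω '' E ⊆ I)
    (μI : Measure ℝ) (hμI : μI = (μ I)⁻¹ • μ.restrict I)
    (r : ℝ) (hr : 0 < r) :
    (∀ n : ℕ, 1 ≤ n →
      (ω.map p).prod * (ρ ^ ω.length) ^ r * quantErrPow r μ n ≤ quantErrPow r μI n) ∧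
    ∀ t : ℝ, 0 < t →
      ENNReal.ofReal ((ω.map p).prod * (ρ ^ ω.length) ^ r) *
          atTop.limsup (fun k : ℕ => ENNReal.ofReal ((k : ℝ) ^ (r / t) * quantErrPow r μ k)) ≤
        atTop.limsup (fun k : ℕ => ENNReal.ofReal ((k : ℝ) ^ (r / t) * quantErrPow r μI k)) := by
  obtain ⟨hρ0, hρ1⟩ := hρ
  -- basic facts about the maps
  have hfc : ∀ i, Continuous (f i) := by
    intro i
    have : f i = fun x => ρ * x + b i := funext (hf i)
    rw [this]
    exact (continuous_const.mul continuous_id).add continuous_const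
  have hfm : ∀ i, Measurable (f i) := fun i => (hfc i).measurable
  have hiter : ∀ σ : List (Fin N), ∃ c : ℝ, ∀ x, iterMap f σ x = ρ ^ σ.length * x + c := by
    intro σ
    induction σ with
    | nil => exact ⟨0, fun x => by show id x = _; simp⟩
    | cons i τ ih =>
      obtain ⟨c, hc⟩ := ih
      refine ⟨ρ * c + b i, fun x => ?_⟩
      show f i (iterMap f τ x) = _
      rw [hc, hf, List.length_cons, pow_succ]
      ring
  have hiterc : ∀ σ : List (Fin N), Continuous (iterMap f σ) := by
    intro σ
    obtain ⟨c, hc⟩ := hiter σ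
    rw [show iterMap f σ = fun x => ρ ^ σ.length * x + c from funext hc]
    exact (continuous_const.mul continuous_id).add continuous_const
  have hfE : ∀ i, f i '' E ⊆ E := by
    intro i
    conv_rhs => rw [hE]
    exact subset_iUnion (fun j => f j '' E) i
  have hiterE : ∀ σ : List (Fin N), iterMap f σ '' E ⊆ E := by
    intro σ
    induction σ with
    | nil => intro z hz; obtain ⟨x, hx, rfl⟩ := hz; exact hx
    | cons i τ ih =>
      intro z hz
      obtain ⟨x, hx, rfl⟩ := hz
      exact hfE i ⟨iterMap f τ x, ih ⟨x, hx, rfl⟩, rfl⟩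
  have hEclosed : IsClosed E := hEcpt.isClosed
  have hEmeas : MeasurableSet E := hEclosed.measurableSet
  have hsum1 : (∑ i, ENNReal.ofReal (p i)) = 1 := by
    rw [← ENNReal.ofReal_sum_of_nonneg (fun i _ => (hp i).le), hp1, ENNReal.ofReal_one]
  -- infDist contraction
  have hcontract : ∀ i x, Metric.infDist (f i x) E ≤ ρ * Metric.infDist x E := by
    intro i x
    have h1 : Metric.infDist (f i x) E ≤ Metric.infDist (f i x) (f i '' E) :=
      Metric.infDist_le_infDist_of_subset (hfE i) (hEne.image _)
    have himg : f i '' E = (fun y => ρ * y + b i) '' E :=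
      Set.image_congr fun x _ => hf i x
    have h2 : Metric.infDist (f i x) (f i '' E) = ρ * Metric.infDist x E := by
      rw [hf i x, himg, infDist_affine_image hρ0 _ _ hEne]
    linarith
  -- μ is supported on E
  set A : ℝ → Set ℝ := fun t => {x | t < Metric.infDist x E} with hA
  have hAopen : ∀ t, IsOpen (A t) :=
    fun t => isOpen_lt continuous_const (Metric.continuous_infDist_pt E)
  have hAmeas : ∀ t, MeasurableSet (A t) := fun t => (hAopen t).measurableSet
  have hstep : ∀ t : ℝ, 0 < t → μ (A t) ≤ μ (A (t / ρ)) := by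
    intro t ht
    have hsub : ∀ i, f i ⁻¹' (A t) ⊆ A (t / ρ) := by
      intro i x hx
      simp only [hA, mem_preimage, mem_setOf_eq] at hx ⊢
      have h2 := hcontract i x
      rw [div_lt_iff₀ hρ0]
      nlinarith
    calc μ (A t) = ∑ i, ENNReal.ofReal (p i) * μ (f i ⁻¹' A t) := by
          conv_lhs => rw [hμ]
          rw [Measure.finset_sum_apply]
          refine Finset.sum_congr rfl fun i _ => ?_
          rw [Measure.smul_apply, smul_eq_mul, Measure.map_apply (hfm i) (hAmeas t)]
      _ ≤ ∑ i, ENNReal.ofReal (p i) * μ (A (t / ρ)) :=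
          Finset.sum_le_sum fun i _ => mul_le_mul_right (measure_mono (hsub i)) _
      _ = μ (A (t / ρ)) := by rw [← Finset.sum_mul, hsum1, one_mul]
  have hiterstep : ∀ t : ℝ, 0 < t → ∀ n : ℕ, μ (A t) ≤ μ (A (t / ρ ^ n)) := by
    intro t ht n
    induction n with
    | zero => simp
    | succ n ih =>
      have h2 : μ (A (t / ρ ^ n)) ≤ μ (A (t / ρ ^ n / ρ)) := hstep _ (by positivity)
      rw [div_div, ← pow_succ] at h2
      exact ih.trans h2
  have hAnull : ∀ t : ℝ, 0 < t → μ (A t) = 0 := by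
    intro t ht
    have hanti : Antitone (fun n : ℕ => A (t / ρ ^ n)) := by
      intro n m hnm x hx
      simp only [hA, mem_setOf_eq] at hx ⊢
      have h1 : t / ρ ^ n ≤ t / ρ ^ m :=
        div_le_div_of_nonneg_left ht.le (pow_pos hρ0 m)
          (pow_le_pow_of_le_one hρ0.le hρ1.le hnm)
      linarith
    have hempty : ⋂ n : ℕ, A (t / ρ ^ n) = ∅ := by
      ext x
      simp only [mem_iInter, mem_empty_iff_false, iff_false, not_forall]
      have hdn : (0:ℝ) ≤ Metric.infDist x E := Metric.infDist_nonneg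
      obtain ⟨n, hn⟩ := exists_pow_lt_of_lt_one
        (div_pos ht (by linarith : (0:ℝ) < Metric.infDist x E + 1)) hρ1
      refine ⟨n, ?_⟩
      simp only [hA, mem_setOf_eq, not_lt]
      rw [lt_div_iff₀ (by linarith : (0:ℝ) < Metric.infDist x E + 1)] at hn
      rw [le_div_iff₀ (pow_pos hρ0 n)]
      nlinarith [pow_pos hρ0 n]
    have htend := tendsto_measure_iInter_atTop
      (fun n => (hAmeas (t / ρ ^ n)).nullMeasurableSet) hanti ⟨0, measure_ne_top μ _⟩
    rw [hempty, measure_empty] at htend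
    have hle := ge_of_tendsto' htend (fun n => hiterstep t ht n)
    exact le_antisymm hle (zero_le)
  have hEc : μ Eᶜ = 0 := by
    have hsub : Eᶜ ⊆ ⋃ n : ℕ, A (1 / ((n : ℝ) + 1)) := by
      intro x hx
      have hpos : 0 < Metric.infDist x E := (hEclosed.notMem_iff_infDist_pos hEne).1 hx
      obtain ⟨n, hn⟩ := exists_nat_one_div_lt hpos
      exact mem_iUnion.2 ⟨n, hn⟩
    refine le_antisymm ?_ (zero_le)
    calc μ Eᶜ ≤ μ (⋃ n : ℕ, A (1 / ((n : ℝ) + 1))) := measure_mono hsub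
      _ ≤ ∑' n : ℕ, μ (A (1 / ((n : ℝ) + 1))) := measure_iUnion_le _
      _ = 0 := by
          have hz : ∀ n : ℕ, μ (A (1 / ((n : ℝ) + 1))) = 0 :=
            fun n => hAnull _ (by positivity)
          simp only [hz, tsum_zero]
  -- word measure inequality
  have hsmul_mono : ∀ (c : ℝ≥0∞) (ν ν' : Measure ℝ), ν ≤ ν' → c • ν ≤ c • ν' := by
    intro c ν ν' h
    rw [Measure.le_iff'] at h ⊢
    intro s
    simp only [Measure.smul_apply, smul_eq_mul]
    exact mul_le_mul_right (h s) c
  have hword : ∀ σ : List (Fin N),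
      ENNReal.ofReal ((σ.map p).prod) • μ.map (iterMap f σ) ≤ μ := by
    intro σ
    induction σ with
    | nil => simp [iterMap, Measure.map_id]
    | cons i τ ih =>
      have h1 : ENNReal.ofReal (p i) • μ.map (f i) ≤ μ := by
        conv_rhs => rw [hμ]
        rw [Measure.le_iff']
        intro s'
        rw [Measure.finset_sum_apply]
        exact Finset.single_le_sum
          (f := fun j => (ENNReal.ofReal (p j) • μ.map (f j)) s')
          (fun j _ => zero_le) (Finset.mem_univ i)
      have h2 : μ.map (iterMap f (i :: τ)) = (μ.map (iterMap f τ)).map (f i) := by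
        rw [Measure.map_map (hfm i) (hiterc τ).measurable]
        rfl
      have h3 : (ENNReal.ofReal ((τ.map p).prod) • μ.map (iterMap f τ)).map (f i)
          = ENNReal.ofReal ((τ.map p).prod) • (μ.map (iterMap f τ)).map (f i) :=
        Measure.map_smul _ _ _
      calc ENNReal.ofReal (((i :: τ).map p).prod) • μ.map (iterMap f (i :: τ))
          = ENNReal.ofReal (p i) •
            (ENNReal.ofReal ((τ.map p).prod) • (μ.map (iterMap f τ)).map (f i)) := by
            rw [h2, smul_smul, ← ENNReal.ofReal_mul (hp i).le, List.map_cons, List.prod_cons]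
        _ = ENNReal.ofReal (p i) •
            ((ENNReal.ofReal ((τ.map p).prod) • μ.map (iterMap f τ)).map (f i)) := by rw [h3]
        _ ≤ ENNReal.ofReal (p i) • μ.map (f i) :=
            hsmul_mono _ _ _ (Measure.map_mono ih (hfm i))
        _ ≤ μ := h1
  -- integrand facts
  have hgc : ∀ α : Finset ℝ, Continuous (fun x => Metric.infDist x (α : Set ℝ) ^ r) :=
    fun α => (Metric.continuous_infDist_pt (α : Set ℝ)).rpow_const (fun x => Or.inr hr.le)
  have hgnn : ∀ (α : Finset ℝ) (x : ℝ), 0 ≤ Metric.infDist x (α : Set ℝ) ^ r :=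
    fun α x => Real.rpow_nonneg Metric.infDist_nonneg r
  have hint : ∀ (α : Finset ℝ) (ν : Measure ℝ), IsFiniteMeasure ν → ν Eᶜ = 0 →
      Integrable (fun x => Metric.infDist x (α : Set ℝ) ^ r) ν := by
    intro α ν hfin hν
    haveI := hfin
    obtain ⟨x₀, -, hM⟩ := hEcpt.exists_isMaxOn hEne (hgc α).continuousOn
    refine Integrable.mono' (integrable_const (Metric.infDist x₀ (α : Set ℝ) ^ r))
      (hgc α).aestronglyMeasurable ?_
    have hae : ∀ᵐ x ∂ν, x ∈ E := by
      rw [ae_iff]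
      simpa [Set.compl_def] using hν
    filter_upwards [hae] with x hx
    rw [Real.norm_eq_abs, abs_of_nonneg (hgnn α x)]
    exact hM hx
  -- lower bounds on quantization sets
  have hbdd : ∀ (ν : Measure ℝ) (n : ℕ), BddBelow {y | ∃ α : Finset ℝ, α.Nonempty ∧
      α.card ≤ n ∧ y = ∫ x, (Metric.infDist x (α : Set ℝ)) ^ r ∂ν} := by
    intro ν n
    refine ⟨0, fun y hy => ?_⟩
    obtain ⟨γ, -, -, rfl⟩ := hy
    exact integral_nonneg (hgnn γ)
  have hqnn : ∀ (ν : Measure ℝ) (n : ℕ), 1 ≤ n → 0 ≤ quantErrPow r ν n := by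
    intro ν n hn
    refine le_csInf ⟨∫ x, (Metric.infDist x (({0} : Finset ℝ) : Set ℝ)) ^ r ∂ν,
      ({0} : Finset ℝ), Finset.singleton_nonempty 0, by simpa using hn, rfl⟩ ?_
    rintro y ⟨γ, -, -, rfl⟩
    exact integral_nonneg (hgnn γ)
  -- key quantities for the word ω
  obtain ⟨c₀, hc₀⟩ := hiter ω
  set s : ℝ := ρ ^ ω.length with hs
  have hspos : 0 < s := pow_pos hρ0 _
  have hprodpos : 0 < (ω.map p).prod := by
    apply List.prod_pos
    intro x hx
    rw [List.mem_map] at hx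
    obtain ⟨i, -, rfl⟩ := hx
    exact hp i
  set ν' : Measure ℝ := μ.map (iterMap f ω) with hν'
  have hν'I : ν'.restrict I = ν' := by
    apply Measure.restrict_eq_self_of_ae_mem
    rw [ae_iff]
    have : ν' Iᶜ = 0 := by
      rw [hν', Measure.map_apply (hiterc ω).measurable hImeas.compl]
      refine measure_mono_null (fun x hx => ?_) hEc
      intro hxE
      exact hx (hIE ⟨x, hxE, rfl⟩)
    simpa [Set.compl_def] using this
  have hrestrictEc : (μ.restrict I) Eᶜ = 0 := by
    rw [Measure.restrict_apply hEmeas.compl]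
    exact measure_mono_null inter_subset_left hEc
  have hfinres : IsFiniteMeasure (μ.restrict I) := inferInstance
  -- the measure comparison restricted to I
  have hcompare : ENNReal.ofReal ((ω.map p).prod) • ν' ≤ μ.restrict I := by
    have h1 := Measure.restrict_mono (Subset.refl I) (hword ω)
    rwa [Measure.restrict_smul, hν'I] at h1
  -- main pointwise bound
  have key : ∀ n : ℕ, 1 ≤ n → ∀ α : Finset ℝ, α.Nonempty → α.card ≤ n →
      (ω.map p).prod * s ^ r * quantErrPow r μ n ≤
        ∫ x, (Metric.infDist x (α : Set ℝ)) ^ r ∂μI := by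
    intro n hn α hαne hαcard
    set φ : ℝ → ℝ := fun z => (z - c₀) / s with hφ
    set β : Finset ℝ := α.image φ with hβ
    have hβne : β.Nonempty := hαne.image _
    have hβcard : β.card ≤ n := (Finset.card_image_le).trans hαcard
    have himg : (fun y => s * y + c₀) '' (φ '' (α : Set ℝ)) = (α : Set ℝ) := by
      rw [Set.image_image]
      have hcomp : ∀ z : ℝ, s * ((z - c₀) / s) + c₀ = z := fun z => by field_simp; ring
      simp only [hφ, hcomp]
      exact Set.image_id _
    have hφne : (φ '' (α : Set ℝ)).Nonempty :=
      (Finset.coe_nonempty.2 hαne).image _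
    have hpt : ∀ x, (Metric.infDist (iterMap f ω x) (α : Set ℝ)) ^ r
        = s ^ r * (Metric.infDist x (β : Set ℝ)) ^ r := by
      intro x
      have h1 : Metric.infDist (iterMap f ω x) (α : Set ℝ)
          = s * Metric.infDist x (φ '' (α : Set ℝ)) := by
        conv_lhs => rw [hc₀ x, ← himg]
        exact infDist_affine_image hspos c₀ x hφne
      rw [h1, Real.mul_rpow hspos.le Metric.infDist_nonneg, hβ, Finset.coe_image]
    -- chain of (in)equalities
    have e1 : ∫ x, (Metric.infDist x (α : Set ℝ)) ^ r ∂μI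
        = ((μ I)⁻¹).toReal * ∫ x, (Metric.infDist x (α : Set ℝ)) ^ r ∂(μ.restrict I) := by
      rw [hμI, integral_smul_measure, smul_eq_mul]
    have e2 : ∫ x, (Metric.infDist x (α : Set ℝ)) ^ r
          ∂(ENNReal.ofReal ((ω.map p).prod) • ν')
        ≤ ∫ x, (Metric.infDist x (α : Set ℝ)) ^ r ∂(μ.restrict I) :=
      integral_mono_measure hcompare (Eventually.of_forall (hgnn α))
        (hint α (μ.restrict I) hfinres hrestrictEc)
    have e3 : ∫ x, (Metric.infDist x (α : Set ℝ)) ^ r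
          ∂(ENNReal.ofReal ((ω.map p).prod) • ν')
        = (ω.map p).prod * ∫ x, (Metric.infDist x (α : Set ℝ)) ^ r ∂ν' := by
      rw [integral_smul_measure, smul_eq_mul, ENNReal.toReal_ofReal hprodpos.le]
    have e4 : ∫ x, (Metric.infDist x (α : Set ℝ)) ^ r ∂ν'
        = s ^ r * ∫ x, (Metric.infDist x (β : Set ℝ)) ^ r ∂μ := by
      rw [hν', integral_map (hiterc ω).measurable.aemeasurable
        (hgc α).aestronglyMeasurable]
      simp only [hpt]
      exact integral_const_mul _ _
    have e5 : quantErrPow r μ n ≤ ∫ x, (Metric.infDist x (β : Set ℝ)) ^ r ∂μ :=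
      csInf_le (hbdd μ n) ⟨β, hβne, hβcard, rfl⟩
    have hXnn : 0 ≤ ∫ x, (Metric.infDist x (α : Set ℝ)) ^ r ∂(μ.restrict I) :=
      integral_nonneg (hgnn α)
    have hinv1 : (1 : ℝ) ≤ ((μ I)⁻¹).toReal := by
      rw [ENNReal.toReal_inv]
      refine (one_le_inv₀ (ENNReal.toReal_pos hIpos.ne' (measure_ne_top μ I))).2 ?_
      calc (μ I).toReal ≤ (1 : ℝ≥0∞).toReal :=
            ENNReal.toReal_mono ENNReal.one_ne_top prob_le_one
        _ = 1 := by simp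
    have hchain : (ω.map p).prod * s ^ r * quantErrPow r μ n ≤
        ∫ x, (Metric.infDist x (α : Set ℝ)) ^ r ∂(μ.restrict I) := by
      calc (ω.map p).prod * s ^ r * quantErrPow r μ n
          ≤ (ω.map p).prod * s ^ r * ∫ x, (Metric.infDist x (β : Set ℝ)) ^ r ∂μ := by
            apply mul_le_mul_of_nonneg_left e5
            positivity
        _ = (ω.map p).prod * ∫ x, (Metric.infDist x (α : Set ℝ)) ^ r ∂ν' := by
            rw [e4]; ring
        _ = ∫ x, (Metric.infDist x (α : Set ℝ)) ^ r
              ∂(ENNReal.ofReal ((ω.map p).prod) • ν') := e3.symm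
        _ ≤ _ := e2
    calc (ω.map p).prod * s ^ r * quantErrPow r μ n
        ≤ ∫ x, (Metric.infDist x (α : Set ℝ)) ^ r ∂(μ.restrict I) := hchain
      _ ≤ ((μ I)⁻¹).toReal * ∫ x, (Metric.infDist x (α : Set ℝ)) ^ r ∂(μ.restrict I) :=
          le_mul_of_one_le_left hXnn hinv1
      _ = ∫ x, (Metric.infDist x (α : Set ℝ)) ^ r ∂μI := e1.symm
  -- part 1
  have part1 : ∀ n : ℕ, 1 ≤ n →
      (ω.map p).prod * (ρ ^ ω.length) ^ r * quantErrPow r μ n ≤ quantErrPow r μI n := by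
    intro n hn
    refine le_csInf ⟨∫ x, (Metric.infDist x (({0} : Finset ℝ) : Set ℝ)) ^ r ∂μI,
      ({0} : Finset ℝ), Finset.singleton_nonempty 0, by simpa using hn, rfl⟩ ?_
    rintro y ⟨α, hαne, hαcard, rfl⟩
    exact key n hn α hαne hαcard
  refine ⟨part1, ?_⟩
  -- part 2
  intro t ht
  set C : ℝ := (ω.map p).prod * (ρ ^ ω.length) ^ r with hC
  have hCpos : 0 < C := mul_pos hprodpos (Real.rpow_pos_of_pos hspos r)
  have hev : ∀ᶠ k : ℕ in atTop, ENNReal.ofReal C *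
      ENNReal.ofReal ((k : ℝ) ^ (r / t) * quantErrPow r μ k) ≤
      ENNReal.ofReal ((k : ℝ) ^ (r / t) * quantErrPow r μI k) := by
    filter_upwards [eventually_ge_atTop 1] with k hk
    rw [← ENNReal.ofReal_mul hCpos.le]
    apply ENNReal.ofReal_le_ofReal
    have h1 := part1 k hk
    have hknn : (0:ℝ) ≤ (k : ℝ) ^ (r / t) := Real.rpow_nonneg (Nat.cast_nonneg k) _
    calc C * ((k : ℝ) ^ (r / t) * quantErrPow r μ k)
        = (k : ℝ) ^ (r / t) * (C * quantErrPow r μ k) := by ring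
      _ ≤ (k : ℝ) ^ (r / t) * quantErrPow r μI k := mul_le_mul_of_nonneg_left h1 hknn
  calc ENNReal.ofReal C *
        atTop.limsup (fun k : ℕ => ENNReal.ofReal ((k : ℝ) ^ (r / t) * quantErrPow r μ k))
      = atTop.limsup (fun k : ℕ => ENNReal.ofReal C *
          ENNReal.ofReal ((k : ℝ) ^ (r / t) * quantErrPow r μ k)) :=
        (ENNReal.limsup_const_mul_of_ne_top ENNReal.ofReal_ne_top).symm
    _ ≤ atTop.limsup (fun k : ℕ => ENNReal.ofReal ((k : ℝ) ^ (r / t) * quantErrPow r μI k)) :=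
        limsup_le_limsup hev
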